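/- Let M₁, …, M_k be complex symmetric m×m matrices and define F_i : ℝ^m → ℂ by F_i(x) = xᵀM_ix. Then the family {F₁,…,F_k} satisfies (∇ₓF_i)ᵀ∇ₓF_j = 0 for all x ∈ ℝ^m and all i, j if and only if M_iM_j + M_jM_i = 0 for all i, j (including i = j). -/
import Mathlib

/-- For `Fᵢ(x) = xᵀMᵢx` with `Mᵢ` complex symmetric, whose gradients are `∇ₓFᵢ = 2Mᵢx`:
the family satisfies `(∇ₓFᵢ)ᵀ∇ₓFⱼ = 0` for all real `x` and all `i, j`
iff `MᵢMⱼ + MⱼMᵢ = 0` for all `i, j`. -/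
theorem stmt1 {m k : ℕ} (M : Fin k → Matrix (Fin m) (Fin m) ℂ)
    (hM : ∀ i, (M i).IsSymm) :
    (∀ (x : Fin m → ℝ) (i j : Fin k),
        ∑ l, (2 * ∑ r, M i l r * (x r : ℂ)) * (2 * ∑ r, M j l r * (x r : ℂ)) = 0)
    ↔ (∀ i j, M i * M j + M j * M i = 0) := by
  have hsym : ∀ i (a b : Fin m), M i a b = M i b a := fun i a b => (hM i).apply b a
  have hS : ∀ i j (p q : Fin m), (∑ l, M i l p * M j l q) = (M i * M j) p q := by
    intro i j p q
    rw [Matrix.mul_apply]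
    exact Finset.sum_congr rfl fun l _ => by rw [hsym i l p]
  constructor
  · intro h i j
    have key : ∀ (x : Fin m → ℝ),
        (∑ l, (∑ r, M i l r * (x r : ℂ)) * (∑ r, M j l r * (x r : ℂ))) = 0 := by
      intro x
      have := h x i j
      have h4 : (4:ℂ) * ∑ l, (∑ r, M i l r * (x r : ℂ)) * (∑ r, M j l r * (x r : ℂ)) = 0 := by
        rw [Finset.mul_sum, ← this]
        exact Finset.sum_congr rfl fun l _ => by ring
      have h40 : (4:ℂ) ≠ 0 := by norm_num
      exact (mul_eq_zero.mp h4).resolve_left h40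
    have hsingle : ∀ (i' : Fin k) (l p : Fin m),
        (∑ r, M i' l r * (((Pi.single p 1 : Fin m → ℝ) r : ℝ) : ℂ)) = M i' l p := by
      intro i' l p
      simp [Pi.single_apply, apply_ite (fun (t:ℝ) => (t:ℂ))]
    have hd' : ∀ (p : Fin m), (∑ l, M i l p * M j l p) = 0 := by
      intro p
      have := key (Pi.single p 1)
      rwa [Finset.sum_congr rfl (fun l _ => by rw [hsingle i l p, hsingle j l p])] at this
    ext p q
    have := key (Pi.single p 1 + Pi.single q 1)
    have hadd : ∀ (i' : Fin k) (l : Fin m),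
        (∑ r, M i' l r * (((Pi.single p 1 + Pi.single q 1 : Fin m → ℝ) r : ℝ) : ℂ))
          = M i' l p + M i' l q := by
      intro i' l
      simp only [Pi.add_apply, Complex.ofReal_add, mul_add, Finset.sum_add_distrib]
      rw [hsingle i' l p, hsingle i' l q]
    rw [Finset.sum_congr rfl (fun l _ => by rw [hadd i l, hadd j l])] at this
    have expand : (∑ l, (M i l p + M i l q) * (M j l p + M j l q))
        = (∑ l, M i l p * M j l p) + (∑ l, M i l q * M j l q)
          + ((∑ l, M i l p * M j l q) + (∑ l, M i l q * M j l p)) := by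
      rw [← Finset.sum_add_distrib, ← Finset.sum_add_distrib, ← Finset.sum_add_distrib]
      exact Finset.sum_congr rfl fun l _ => by ring
    rw [expand, hd' p, hd' q] at this
    have hqp : (∑ l, M i l q * M j l p) = (M j * M i) p q := by
      rw [← hS j i p q]
      exact Finset.sum_congr rfl fun l _ => mul_comm _ _
    rw [hS i j p q, hqp] at this
    simpa using this
  · intro h x i j
    have T : ∀ (i' j' : Fin k),
        (∑ l, (∑ r, M i' l r * (x r : ℂ)) * (∑ r, M j' l r * (x r : ℂ)))
          = ∑ r, ∑ s, (x r : ℂ) * (x s : ℂ) * (M i' * M j') r s := by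
      intro i' j'
      simp_rw [Finset.sum_mul_sum]
      rw [Finset.sum_comm]
      refine Finset.sum_congr rfl fun r _ => ?_
      rw [Finset.sum_comm]
      refine Finset.sum_congr rfl fun s _ => ?_
      rw [← hS i' j' r s, Finset.mul_sum]
      exact Finset.sum_congr rfl fun l _ => by ring
    have e2 : (∑ r, ∑ s, (x r : ℂ) * (x s : ℂ) * (M j * M i) r s)
        = ∑ r, ∑ s, (x r : ℂ) * (x s : ℂ) * (M i * M j) r s := by
      rw [Finset.sum_comm]
      refine Finset.sum_congr rfl fun r _ => Finset.sum_congr rfl fun s _ => ?_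
      have : (M j * M i) s r = (M i * M j) r s := by
        rw [← hS j i s r, ← hS i j r s]
        exact Finset.sum_congr rfl fun l _ => mul_comm _ _
      rw [this]; ring
    have expand : (∑ l, (2 * ∑ r, M i l r * (x r : ℂ)) * (2 * ∑ r, M j l r * (x r : ℂ)))
        = 2 * ∑ r, ∑ s, (x r : ℂ) * (x s : ℂ) * ((M i * M j) r s + (M j * M i) r s) := by
      have lhs4 : (∑ l, (2 * ∑ r, M i l r * (x r : ℂ)) * (2 * ∑ r, M j l r * (x r : ℂ)))
          = 4 * ∑ l, (∑ r, M i l r * (x r : ℂ)) * (∑ r, M j l r * (x r : ℂ)) := by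
        rw [Finset.mul_sum]
        exact Finset.sum_congr rfl fun l _ => by ring
      rw [lhs4, T i j]
      rw [show (2:ℂ) * ∑ r, ∑ s, (x r : ℂ) * (x s : ℂ) * ((M i * M j) r s + (M j * M i) r s)
          = 2 * ((∑ r, ∑ s, (x r : ℂ) * (x s : ℂ) * (M i * M j) r s)
            + ∑ r, ∑ s, (x r : ℂ) * (x s : ℂ) * (M j * M i) r s) by
        rw [← Finset.sum_add_distrib]
        congr 1
        exact Finset.sum_congr rfl fun r _ => by
          rw [← Finset.sum_add_distrib]
          exact Finset.sum_congr rfl fun s _ => by ring]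
      rw [e2]; ring
    rw [expand]
    have : ∀ (r s : Fin m), (M i * M j) r s + (M j * M i) r s = 0 := by
      intro r s
      have := h i j
      have := congrFun (congrFun this r) s
      simpa using this
    simp [this]
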